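/- With x, y the explicit matrices of equation (2.1), the characteristic polynomial of z = xy equals t^6 − ((b+ac)/c)·t^5 − (b^q/c)·t^4 − (b/c)·t^2 − ((b^q + c·a^q)/c)·t + 1. -/

import Mathlib

open Polynomial
open Matrix

set_option maxRecDepth 8000
set_option maxHeartbeats 1000000

@[simp] private lemma cons_val_five' {α : Type*} {m : ℕ} (x : α)
    (u : Fin m.succ.succ.succ.succ.succ → α) :
    Matrix.vecCons x u 5
      = Matrix.vecHead (Matrix.vecTail (Matrix.vecTail (Matrix.vecTail (Matrix.vecTail u)))) :=
  rfl

/-- The characteristic polynomial of `z = xy`, for the generators `x`, `y` of equation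
(2.1), is `t⁶ - ((b+ac)/c) t⁵ - (bᵠ/c) t⁴ - (b/c) t² - ((bᵠ + c aᵠ)/c) t + 1`. -/
theorem stmt_16 (q : ℕ) (hq : IsPrimePow q) (F : Type*) [Field F] [Fintype F]
    (hF : Fintype.card F = q ^ 2) (a b c d e : F) (ha : a ^ q ≠ a)
    (hb : b = 2 * a - a ^ (2 * q))
    (hc : c = a ^ (q + 1) - 4) (hc0 : c ≠ 0)
    (hd : d = 2 * a ^ 3 + 2 * a ^ (3 * q) - 12 * a ^ (q + 1) + 16)
    (he : e = -a ^ (4 * q) + 6 * a ^ (2 * q + 1) - a ^ (q + 3) - 8 * a ^ q)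
    (x y : Matrix (Fin 6) (Fin 6) F)
    (hx : x = !![1, 0, 0, 0, 0, 0;
                 0, 1, 0, 0, 0, 0;
                 0, 0, 0, 1, 0, 0;
                 0, 0, 1, 0, 0, 0;
                 0, 0, 0, 0, -1, a;
                 0, 0, 0, 0, 0, 1])
    (hy : y = !![0, 0, 1, 0, 0, 0;
                 1, 0, 0, 0, 0, 0;
                 0, 1, 0, 0, 0, 0;
                 0, 0, 0, b / c, e / c ^ 2, d / c ^ 2;
                 0, 0, 0, 1, -(b / c), -(b ^ q / c);
                 0, 0, 0, 0, 1, 0]) :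
    (x * y).charpoly
      = X ^ 6 - C ((b + a * c) / c) * X ^ 5 - C (b ^ q / c) * X ^ 4
          - C (b / c) * X ^ 2 - C ((b ^ q + c * a ^ q) / c) * X + 1 := by
  -- characteristic
  obtain ⟨p, n, hp, hn, hqpn⟩ := hq
  haveI : Fact p.Prime := ⟨hp.nat_prime⟩
  obtain ⟨m, hr, hcard⟩ := FiniteField.card F (ringChar F)
  have hrp : ringChar F = p := by
    have h1 : ringChar F ∣ Fintype.card F := hcard ▸ dvd_pow_self _ m.pos.ne'
    rw [hF, ← hqpn, ← pow_mul] at h1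
    exact (Nat.prime_dvd_prime_iff_eq hr hp.nat_prime).mp (hr.dvd_of_dvd_pow h1)
  haveI : CharP F p := hrp ▸ ringChar.charP F
  -- Frobenius facts
  have hqq : a ^ (q * q) = a := by
    have h := FiniteField.pow_card a
    rwa [hF, pow_two] at h
  have h2F : (2 : F) ^ (p ^ n) = 2 := by
    have h := add_pow_char_pow (R := F) (p := p) (n := n) 1 1
    norm_num at h
    exact h
  have hbq : b ^ q = 2 * a ^ q - a ^ 2 := by
    rw [hb, ← hqpn, sub_pow_char_pow, mul_pow, h2F, hqpn, ← pow_mul, mul_assoc,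
      mul_comm 2 (q*q), pow_mul, hqq]
  -- power rewrites
  have e1 : a ^ (q + 1) = a ^ q * a := by rw [pow_add, pow_one]
  have e2 : a ^ (2 * q) = (a ^ q) ^ 2 := by rw [mul_comm, pow_mul]
  have e3 : a ^ (3 * q) = (a ^ q) ^ 3 := by rw [mul_comm, pow_mul]
  have e21 : a ^ (2 * q + 1) = (a ^ q) ^ 2 * a := by rw [pow_add, pow_one, mul_comm 2 q, pow_mul]
  have eq3 : a ^ (q + 3) = a ^ q * a ^ 3 := pow_add a q 3
  have e4 : a ^ (4 * q) = (a ^ q) ^ 4 := by rw [mul_comm, pow_mul]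
  -- key scalar identities
  have key1 : d + b * b ^ q = c ^ 2 := by
    rw [hbq, hd, hb, hc, e1, e2, e3]; ring
  have key2 : e + a * b * c + b ^ 2 + b ^ q * c + a ^ q * c ^ 2 = 0 := by
    rw [hbq, he, hb, hc, e1, e2, e21, eq3, e4]; ring
  have h2c : (c : F) ^ 2 ≠ 0 := pow_ne_zero _ hc0
  have s1 : d / c ^ 2 + b / c * (b ^ q / c) = 1 := by
    apply mul_right_cancel₀ h2c
    calc (d / c ^ 2 + b / c * (b ^ q / c)) * c ^ 2
        = d / c ^ 2 * c ^ 2 + (b / c * c) * (b ^ q / c * c) := by ring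
      _ = d + b * b ^ q := by
          rw [div_mul_cancel₀ _ h2c, div_mul_cancel₀ _ hc0, div_mul_cancel₀ _ hc0]
      _ = 1 * c ^ 2 := by rw [one_mul]; exact key1
  have s2 : e / c ^ 2 + b / c * a + (b / c) ^ 2 + b ^ q / c + a ^ q = 0 := by
    apply mul_right_cancel₀ h2c
    calc (e / c ^ 2 + b / c * a + (b / c) ^ 2 + b ^ q / c + a ^ q) * c ^ 2
        = e / c ^ 2 * c ^ 2 + (b / c * c) * a * c + (b / c * c) ^ 2
            + (b ^ q / c * c) * c + a ^ q * c ^ 2 := by ring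
      _ = e + b * a * c + b ^ 2 + b ^ q * c + a ^ q * c ^ 2 := by
          rw [div_mul_cancel₀ _ h2c, div_mul_cancel₀ _ hc0, div_mul_cancel₀ _ hc0]
      _ = 0 * c ^ 2 := by rw [zero_mul]; linear_combination key2
  have K1 : (C (d / c ^ 2) + C (b / c) * C (b ^ q / c) : F[X]) = 1 := by
    rw [← C_mul, ← C_add, s1, C_1]
  have K2 : (C (e / c ^ 2) + C (b / c) * C a + C (b / c) ^ 2 + C (b ^ q / c) + C a ^ q
      : F[X]) = 0 := by
    rw [← C_pow, ← C_pow, ← C_mul, ← C_add, ← C_add, ← C_add, ← C_add, s2, C_0]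
  -- the product matrix
  have hz : x * y = !![0, 0, 1, 0, 0, 0;
                       1, 0, 0, 0, 0, 0;
                       0, 0, 0, b / c, e / c ^ 2, d / c ^ 2;
                       0, 1, 0, 0, 0, 0;
                       0, 0, 0, -1, b / c + a, b ^ q / c;
                       0, 0, 0, 0, 1, 0] := by
    subst hx hy
    apply Matrix.ext
    intro i j
    fin_cases i <;> fin_cases j <;>
      simp [Matrix.mul_apply, Fin.sum_univ_six, Matrix.vecHead, Matrix.vecTail] <;> ring
  rw [hz, Matrix.charpoly]
  have hcm : charmatrix (!![0, 0, 1, 0, 0, 0;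
                       1, 0, 0, 0, 0, 0;
                       0, 0, 0, b / c, e / c ^ 2, d / c ^ 2;
                       0, 1, 0, 0, 0, 0;
                       0, 0, 0, -1, b / c + a, b ^ q / c;
                       0, 0, 0, 0, 1, 0] : Matrix (Fin 6) (Fin 6) F)
      = !![(X : F[X]), 0, -1, 0, 0, 0;
           -1, X, 0, 0, 0, 0;
           0, 0, X, -C (b / c), -C (e / c ^ 2), -C (d / c ^ 2);
           0, -1, 0, X, 0, 0;
           0, 0, 0, 1, X - C (b / c + a), -C (b ^ q / c);
           0, 0, 0, 0, -1, X] := by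
    apply Matrix.ext
    intro i j
    fin_cases i <;> fin_cases j <;>
      simp [charmatrix_apply_eq, charmatrix_apply_ne, Matrix.vecHead, Matrix.vecTail]
  rw [hcm]
  have r1 : (b + a * c) / c = b / c + a := by field_simp
  have r2 : (b ^ q + c * a ^ q) / c = b ^ q / c + a ^ q := by field_simp
  rw [r1, r2]
  simp only [C_add]
  simp [Matrix.det_succ_row_zero, Fin.sum_univ_succ, Matrix.submatrix_apply,
    Fin.succAbove, Matrix.cons_val_succ, Fin.castSucc, Fin.castAdd, Fin.castLE]
  linear_combination K1 + X * K2
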